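/- Let Z be a set, 𝒴 ⊆ 𝒫(Z) closed under arbitrary intersections and finite unions, containing all singletons, with ∅, Z ∈ 𝒴, and μ : 𝒴 → 𝒴. (a) If μ satisfies (μ=) for finite sets, (μ∈), (μPR3) and (μ∅fin), then there is a ranked binary relation ≺ on Z (a ranked preferential structure without copies) such that every finite nonempty X ∈ 𝒴 contains a ≺-minimal element and μ(U) = ⌢(μ_≺(U)) for all U ∈ 𝒴, where μ_≺(U) := {x ∈ U : there is no x' ∈ U with x' ≺ x}. (b) Conversely, if ≺ is a ranked binary relation on Z such that every finite nonempty X ∈ 𝒴 contains a ≺-minimal element and μ : 𝒴 → 𝒴 satisfies μ(U) = ⌢(μ_≺(U)) for all U ∈ 𝒴, then μ satisfies (μ=) for finite sets, (μ∈), (μPR3) and (μ∅fin). -/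

import Mathlib

universe u

/-- The hull `⌢A` of `A` with respect to 𝒴. -/
def hull {Z : Type u} (𝒴 : Set (Set Z)) (A : Set Z) : Set Z :=
  ⋂₀ {X | X ∈ 𝒴 ∧ A ⊆ X}

/-- `μ₃(U) := {x ∈ U : for all y ∈ U, x ∈ μ({x, y})}`. -/
def mu3 {Z : Type u} (μ : Set Z → Set Z) (U : Set Z) : Set Z :=
  {x ∈ U | ∀ y ∈ U, x ∈ μ {x, y}}

/-- A binary relation is ranked iff incomparable elements are below resp.
above exactly the same elements. -/
def RankedRel {Z : Type u} (prec : Z → Z → Prop) : Prop :=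
  ∀ x x' : Z, ¬ prec x x' → ¬ prec x' x →
    ∀ y : Z, (prec y x ↔ prec y x') ∧ (prec x y ↔ prec x' y)

/-- The set of `≺`-minimal elements of `U` (structure without copies). -/
def muMin {Z : Type u} (prec : Z → Z → Prop) (U : Set Z) : Set Z :=
  {x ∈ U | ∀ y ∈ U, ¬ prec y x}

lemma mem_muMin_iff {Z : Type u} {prec : Z → Z → Prop} {U : Set Z} {x : Z} :
    x ∈ muMin prec U ↔ x ∈ U ∧ ∀ y ∈ U, ¬ prec y x := Iff.rfl

lemma mem_mu3_iff {Z : Type u} {μ : Set Z → Set Z} {U : Set Z} {x : Z} :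
    x ∈ mu3 μ U ↔ x ∈ U ∧ ∀ y ∈ U, x ∈ μ {x, y} := Iff.rfl

lemma subset_hull' {Z : Type u} (𝒴 : Set (Set Z)) (A : Set Z) : A ⊆ hull 𝒴 A := by
  intro x hx
  intro X hX
  exact hX.2 hx

lemma hull_subset_of_mem' {Z : Type u} {𝒴 : Set (Set Z)} {A X : Set Z}
    (hX : X ∈ 𝒴) (h : A ⊆ X) : hull 𝒴 A ⊆ X :=
  Set.sInter_subset_of_mem ⟨hX, h⟩

lemma hull_eq_self' {Z : Type u} {𝒴 : Set (Set Z)} {A : Set Z} (hA : A ∈ 𝒴) :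
    hull 𝒴 A = A :=
  subset_antisymm (hull_subset_of_mem' hA subset_rfl) (subset_hull' 𝒴 A)

lemma finite_mem_family {Z : Type u} {𝒴 : Set (Set Z)}
    (hUnion : ∀ A ∈ 𝒴, ∀ B ∈ 𝒴, A ∪ B ∈ 𝒴)
    (hsing : ∀ x : Z, {x} ∈ 𝒴) (hempty : (∅ : Set Z) ∈ 𝒴)
    {S : Set Z} (hS : S.Finite) : S ∈ 𝒴 := by
  refine Set.Finite.induction_on (motive := fun s _ => s ∈ 𝒴) S hS hempty ?_
  intro a s _ _ ih
  rw [Set.insert_eq]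
  exact hUnion _ (hsing a) _ ih

theorem ranked_representation_hull {Z : Type u} (𝒴 : Set (Set Z)) (μ : Set Z → Set Z)
    (hmem : ∀ X ∈ 𝒴, μ X ∈ 𝒴)
    (hInter : ∀ S : Set (Set Z), S ⊆ 𝒴 → S.Nonempty → ⋂₀ S ∈ 𝒴)
    (hUnion : ∀ A ∈ 𝒴, ∀ B ∈ 𝒴, A ∪ B ∈ 𝒴)
    (hsing : ∀ x : Z, {x} ∈ 𝒴)
    (hempty : (∅ : Set Z) ∈ 𝒴) (huniv : (Set.univ : Set Z) ∈ 𝒴) :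
    (((∀ X ∈ 𝒴, ∀ Y ∈ 𝒴, X.Finite → Y.Finite → X ⊆ Y →
         (μ Y ∩ X).Nonempty → μ Y ∩ X = μ X) ∧
      (∀ X ∈ 𝒴, ∀ a ∈ X, a ∉ μ X → ∃ b ∈ X, a ∉ μ {a, b}) ∧
      (∀ U ∈ 𝒴, ¬ ∃ X ∈ 𝒴, mu3 μ U ⊆ X ∧ X ⊂ μ U) ∧
      (∀ X ∈ 𝒴, X.Finite → X.Nonempty → (μ X).Nonempty)) →
      ∃ prec : Z → Z → Prop, RankedRel prec ∧
        (∀ X ∈ 𝒴, X.Finite → X.Nonempty → (muMin prec X).Nonempty) ∧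
        ∀ U ∈ 𝒴, μ U = hull 𝒴 (muMin prec U)) ∧
    (∀ prec : Z → Z → Prop, RankedRel prec →
      (∀ X ∈ 𝒴, X.Finite → X.Nonempty → (muMin prec X).Nonempty) →
      (∀ U ∈ 𝒴, μ U = hull 𝒴 (muMin prec U)) →
      ((∀ X ∈ 𝒴, ∀ Y ∈ 𝒴, X.Finite → Y.Finite → X ⊆ Y →
         (μ Y ∩ X).Nonempty → μ Y ∩ X = μ X) ∧
      (∀ X ∈ 𝒴, ∀ a ∈ X, a ∉ μ X → ∃ b ∈ X, a ∉ μ {a, b}) ∧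
      (∀ U ∈ 𝒴, ¬ ∃ X ∈ 𝒴, mu3 μ U ⊆ X ∧ X ⊂ μ U) ∧
      (∀ X ∈ 𝒴, X.Finite → X.Nonempty → (μ X).Nonempty))) := by
  have hfin : ∀ S : Set Z, S.Finite → S ∈ 𝒴 :=
    fun S hS => finite_mem_family hUnion hsing hempty hS
  have hpairmem : ∀ x y : Z, ({x, y} : Set Z) ∈ 𝒴 :=
    fun x y => hfin _ ((Set.finite_singleton y).insert x)
  have hinter2 : ∀ A ∈ 𝒴, ∀ B ∈ 𝒴, A ∩ B ∈ 𝒴 := by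
    intro A hA B hB
    have h := hInter {A, B} (by
      intro C hC
      simp only [Set.mem_insert_iff, Set.mem_singleton_iff] at hC
      rcases hC with rfl | rfl <;> assumption) ⟨A, by simp⟩
    rwa [Set.sInter_pair] at h
  constructor
  · -- direction (a)
    rintro ⟨hEq, hIn, hPR3, hNe⟩
    have hmu3mu : ∀ X ∈ 𝒴, mu3 μ X ⊆ μ X := by
      intro X hX x hx
      rw [mem_mu3_iff] at hx
      by_contra hxn
      obtain ⟨b, hb, hb2⟩ := hIn X hX x hx.1 hxn
      exact hb2 (hx.2 b hb)
    have hmusub : ∀ X ∈ 𝒴, μ X ⊆ X := by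
      intro X hX
      by_contra h
      obtain ⟨x, hxμ, hxX⟩ := Set.not_subset.mp h
      refine hPR3 X hX ⟨X ∩ μ X, hinter2 X hX (μ X) (hmem X hX), ?_, ?_⟩
      · intro z hz
        rw [mem_mu3_iff] at hz
        exact ⟨hz.1, hmu3mu X hX hz⟩
      · rw [Set.ssubset_def]
        exact ⟨Set.inter_subset_right, fun hss => hxX (hss hxμ).1⟩
    have hpairsub : ∀ x y : Z, μ {x, y} ⊆ ({x, y} : Set Z) :=
      fun x y => hmusub _ (hpairmem x y)
    have hpairne : ∀ x y : Z, (μ ({x, y} : Set Z)).Nonempty :=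
      fun x y => hNe _ (hpairmem x y) ((Set.finite_singleton y).insert x) ⟨x, by simp⟩
    -- muMin for our relation equals mu3
    have hMinEq : ∀ U : Set Z,
        muMin (fun a b => a ∈ μ {a, b} ∧ b ∉ μ {a, b}) U = mu3 μ U := by
      intro U
      ext x
      rw [mem_muMin_iff, mem_mu3_iff]
      constructor
      · rintro ⟨hxU, hmin⟩
        refine ⟨hxU, fun y hy => ?_⟩
        by_contra hxm
        have hym : y ∈ μ ({x, y} : Set Z) := by
          obtain ⟨z, hz⟩ := hpairne x y
          rcases hpairsub x y hz with rfl | rfl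
          · exact absurd hz hxm
          · exact hz
        exact hmin y hy ⟨by rwa [Set.pair_comm], by rwa [Set.pair_comm]⟩
      · rintro ⟨hxU, h3⟩
        refine ⟨hxU, fun y hy hp => ?_⟩
        have hxy := h3 y hy
        rw [Set.pair_comm] at hxy
        exact hp.2 hxy
    have hkey : ∀ U ∈ 𝒴, μ U = hull 𝒴 (mu3 μ U) := by
      intro U hU
      apply subset_antisymm
      · intro x hx X hX
        obtain ⟨hX𝒴, hsubX⟩ := hX
        have hsub2 : μ U ⊆ X ∩ μ U := by
          by_contra h
          exact hPR3 U hU ⟨X ∩ μ U, hinter2 X hX𝒴 (μ U) (hmem U hU),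
            fun z hz => ⟨hsubX hz, hmu3mu U hU hz⟩,
            Set.ssubset_def.mpr ⟨Set.inter_subset_right, h⟩⟩
        exact (hsub2 hx).1
      · exact hull_subset_of_mem' (hmem U hU) (hmu3mu U hU)
    -- key comparison lemmas
    have lemA : ∀ x x' y : Z, x ∈ μ {x, x'} → x' ∈ μ {x, x'} →
        (y ∈ μ {y, x} ∧ x ∉ μ {y, x}) → (y ∈ μ {y, x'} ∧ x' ∉ μ {y, x'}) := by
      intro x x' y hx hx' hp
      obtain ⟨hy, hxn⟩ := hp
      rw [Set.pair_comm y x] at hy hxn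
      by_cases hyx : y = x
      · subst hyx; exact absurd hy hxn
      by_cases hyx' : y = x'
      · subst hyx'; exact absurd hx hxn
      set T : Set Z := {x, x', y} with hT
      have hTfin : T.Finite := (Set.finite_singleton y).insert x' |>.insert x
      have hT𝒴 : T ∈ 𝒴 := hfin T hTfin
      have hTne : (μ T).Nonempty := hNe T hT𝒴 hTfin ⟨x, by simp [hT]⟩
      have hTsub : μ T ⊆ T := hmusub T hT𝒴
      have hpq : ∀ a b : Z, ({a, b} : Set Z) ⊆ T → (μ T ∩ {a, b}).Nonempty →
          μ T ∩ {a, b} = μ {a, b} :=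
        fun a b hab hne => hEq {a, b} (hpairmem a b) T hT𝒴
          ((Set.finite_singleton b).insert a) hTfin hab hne
      have hxnT : x ∉ μ T := by
        intro hxT
        have heq := hpq x y
          (by intro z hz; rcases hz with rfl | rfl <;> simp [hT])
          ⟨x, hxT, by simp⟩
        have hxm : x ∈ μ ({x, y} : Set Z) := by rw [← heq]; exact ⟨hxT, by simp⟩
        exact hxn hxm
      have hx'nT : x' ∉ μ T := by
        intro hx'T
        have heq := hpq x x'
          (by intro z hz; rcases hz with rfl | rfl <;> simp [hT])
          ⟨x', hx'T, by simp⟩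
        have hxi : x ∈ μ T ∩ {x, x'} := by rw [heq]; exact hx
        exact hxnT hxi.1
      have hyT : y ∈ μ T := by
        obtain ⟨z, hz⟩ := hTne
        rcases hTsub hz with rfl | rfl | rfl
        · exact absurd hz hxnT
        · exact absurd hz hx'nT
        · exact hz
      have heq := hpq x' y
        (by intro z hz; rcases hz with rfl | rfl <;> simp [hT])
        ⟨y, hyT, by simp⟩
      have hy' : y ∈ μ ({x', y} : Set Z) := by rw [← heq]; exact ⟨hyT, by simp⟩
      have hx'n : x' ∉ μ ({x', y} : Set Z) := by
        rw [← heq]; intro hc; exact hx'nT hc.1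
      constructor
      · rw [Set.pair_comm y x']; exact hy'
      · rw [Set.pair_comm y x']; exact hx'n
    have lemB : ∀ x x' y : Z, x ∈ μ {x, x'} → x' ∈ μ {x, x'} →
        (x ∈ μ {x, y} ∧ y ∉ μ {x, y}) → (x' ∈ μ {x', y} ∧ y ∉ μ {x', y}) := by
      intro x x' y hx hx' hp
      obtain ⟨hxm, hyn⟩ := hp
      by_cases hyx : y = x
      · subst hyx; exact absurd hxm hyn
      by_cases hyx' : y = x'
      · subst hyx'; exact absurd hx' hyn
      set T : Set Z := {x, x', y} with hT
      have hTfin : T.Finite := (Set.finite_singleton y).insert x' |>.insert x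
      have hT𝒴 : T ∈ 𝒴 := hfin T hTfin
      have hTne : (μ T).Nonempty := hNe T hT𝒴 hTfin ⟨x, by simp [hT]⟩
      have hTsub : μ T ⊆ T := hmusub T hT𝒴
      have hpq : ∀ a b : Z, ({a, b} : Set Z) ⊆ T → (μ T ∩ {a, b}).Nonempty →
          μ T ∩ {a, b} = μ {a, b} :=
        fun a b hab hne => hEq {a, b} (hpairmem a b) T hT𝒴
          ((Set.finite_singleton b).insert a) hTfin hab hne
      have hynT : y ∉ μ T := by
        intro hyT
        have heq := hpq x y
          (by intro z hz; rcases hz with rfl | rfl <;> simp [hT])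
          ⟨y, hyT, by simp⟩
        have : y ∈ μ ({x, y} : Set Z) := by rw [← heq]; exact ⟨hyT, by simp⟩
        exact hyn this
      have hx'T : x' ∈ μ T := by
        obtain ⟨z, hz⟩ := hTne
        rcases hTsub hz with rfl | rfl | rfl
        · -- z = x
          have heq := hpq z x'
            (by intro w hw; rcases hw with rfl | rfl <;> simp [hT])
            ⟨z, hz, by simp⟩
          have hxi : x' ∈ μ T ∩ {z, x'} := by rw [heq]; exact hx'
          exact hxi.1
        · exact hz
        · exact absurd hz hynT
      have heq := hpq x' y
        (by intro z hz; rcases hz with rfl | rfl <;> simp [hT])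
        ⟨x', hx'T, by simp⟩
      constructor
      · rw [← heq]; exact ⟨hx'T, by simp⟩
      · rw [← heq]; intro hc; exact hynT hc.1
    refine ⟨fun a b => a ∈ μ {a, b} ∧ b ∉ μ {a, b}, ?_, ?_, ?_⟩
    · -- ranked
      intro x x' h1 h2 y
      by_cases hxx : x = x'
      · subst hxx; exact ⟨Iff.rfl, Iff.rfl⟩
      have hx : x ∈ μ ({x, x'} : Set Z) := by
        by_contra hxm
        have hx'm : x' ∈ μ ({x, x'} : Set Z) := by
          obtain ⟨z, hz⟩ := hpairne x x'
          rcases hpairsub x x' hz with rfl | rfl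
          · exact absurd hz hxm
          · exact hz
        exact h2 ⟨by rwa [Set.pair_comm], by rwa [Set.pair_comm]⟩
      have hx' : x' ∈ μ ({x, x'} : Set Z) := by
        by_contra hx'm
        exact h1 ⟨hx, hx'm⟩
      have hx2 : x' ∈ μ ({x', x} : Set Z) := by rwa [Set.pair_comm]
      have hx2' : x ∈ μ ({x', x} : Set Z) := by rwa [Set.pair_comm]
      exact ⟨⟨lemA x x' y hx hx', lemA x' x y hx2 hx2'⟩,
             ⟨lemB x x' y hx hx', lemB x' x y hx2 hx2'⟩⟩
    · -- finite minimal elements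
      intro X hX hXfin hXne
      have hsubmu3 : μ X ⊆ mu3 μ X := by
        intro x hxμ
        rw [mem_mu3_iff]
        refine ⟨hmusub X hX hxμ, fun y hy => ?_⟩
        have heq := hEq {x, y} (hpairmem x y) X hX
          ((Set.finite_singleton y).insert x) hXfin
          (by intro z hz
              rcases hz with rfl | rfl
              · exact hmusub X hX hxμ
              · exact hy)
          ⟨x, hxμ, by simp⟩
        rw [← heq]; exact ⟨hxμ, by simp⟩
      obtain ⟨x, hx⟩ := hNe X hX hXfin hXne
      rw [hMinEq]
      exact ⟨x, hsubmu3 hx⟩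
    · -- representation
      intro U hU
      rw [hMinEq]
      exact hkey U hU
  · -- direction (b)
    intro prec hrank hmin hrep
    have hirr : ∀ a : Z, ¬ prec a a := by
      intro a
      obtain ⟨x, hx⟩ := hmin {a} (hsing a) (Set.finite_singleton a) ⟨a, rfl⟩
      rw [mem_muMin_iff] at hx
      obtain ⟨hx1, hx2⟩ := hx
      rcases hx1 with rfl
      exact hx2 x rfl
    have hμfin : ∀ X ∈ 𝒴, X.Finite → μ X = muMin prec X := by
      intro X hX hXfin
      rw [hrep X hX]
      exact hull_eq_self' (hfin _ (hXfin.subset (fun x hx => hx.1)))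
    refine ⟨?_, ?_, ?_, ?_⟩
    · -- (μ=) finite
      intro X hX Y hY hXf hYf hXY hne
      rw [hμfin Y hY hYf, hμfin X hX hXf]
      rw [hμfin Y hY hYf] at hne
      obtain ⟨a, haY, haX⟩ := hne
      rw [mem_muMin_iff] at haY
      ext x
      simp only [Set.mem_inter_iff, mem_muMin_iff]
      constructor
      · rintro ⟨hxY, hxX⟩
        exact ⟨hxX, fun y hy => hxY.2 y (hXY hy)⟩
      · intro hx
        refine ⟨⟨hXY hx.1, fun y hy hpre => ?_⟩, hx.1⟩
        have h1 : ¬ prec a x := hx.2 a haX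
        have h2 : ¬ prec x a := haY.2 x (hXY hx.1)
        exact haY.2 y hy (((hrank x a h2 h1 y).1).mp hpre)
    · -- (μ∈)
      intro X hX a haX hanμ
      have hnm : a ∉ muMin prec X := fun h =>
        hanμ (by rw [hrep X hX]; exact subset_hull' 𝒴 _ h)
      rw [mem_muMin_iff] at hnm
      simp only [not_and, not_forall, not_not] at hnm
      obtain ⟨b, hbX, hpba⟩ := hnm haX
      refine ⟨b, hbX, ?_⟩
      rw [hμfin {a, b} (hpairmem a b) ((Set.finite_singleton b).insert a)]
      rw [mem_muMin_iff]
      intro h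
      exact h.2 b (by simp) hpba
    · -- (μPR3)
      rintro U hU ⟨X, hX𝒴, hsub, hss⟩
      have hMsub : muMin prec U ⊆ mu3 μ U := by
        intro x hx
        rw [mem_muMin_iff] at hx
        obtain ⟨hxU, hminx⟩ := hx
        rw [mem_mu3_iff]
        refine ⟨hxU, fun y hy => ?_⟩
        rw [hμfin {x, y} (hpairmem x y) ((Set.finite_singleton y).insert x)]
        rw [mem_muMin_iff]
        refine ⟨by simp, fun z hz => ?_⟩
        rcases hz with rfl | rfl
        · exact hirr z
        · exact hminx z hy
      have hXsup : μ U ⊆ X := by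
        rw [hrep U hU]
        exact hull_subset_of_mem' hX𝒴 (hMsub.trans hsub)
      exact hss.not_subset hXsup
    · -- (μ∅fin)
      intro X hX hf hne
      rw [hrep X hX]
      exact (hmin X hX hf hne).mono (subset_hull' 𝒴 _)
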